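/- Let G be a 2-connected {P₄, W}-free graph with |V(G)| ≥ 4, and let {A, B} be a partition of V(G) with |A| ≥ |B| ≥ 2 such that every vertex of A is adjacent to every vertex of B. If C is a longest cycle of G, then B ⊆ V(C). -/

import Mathlib

open SimpleGraph

def IsCycleEmb {V : Type*} (G : SimpleGraph V) (n : ℕ) (f : ZMod n → V) : Prop :=
  3 ≤ n ∧ Function.Injective f ∧ ∀ i : ZMod n, G.Adj (f i) (f (i + 1))

def IsLongestCycle {V : Type*} (G : SimpleGraph V) (n : ℕ) (f : ZMod n → V) : Prop :=
  IsCycleEmb G n f ∧ ∀ (m : ℕ) (g : ZMod m → V), IsCycleEmb G m g → m ≤ n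

def IsDominatingCycle {V : Type*} (G : SimpleGraph V) (n : ℕ) (f : ZMod n → V) : Prop :=
  IsCycleEmb G n f ∧ ∀ a b : V, G.Adj a b → a ∈ Set.range f ∨ b ∈ Set.range f

def IsCompOutside {V : Type*} (G : SimpleGraph V) (C : Set V) (H : Set V) : Prop :=
  H.Nonempty ∧ Disjoint H C ∧ (G.induce H).Connected ∧
    ∀ a ∈ H, ∀ b : V, G.Adj a b → b ∉ C → b ∈ H

def TwoConnected {V : Type*} (G : SimpleGraph V) : Prop :=
  3 ≤ Nat.card V ∧ ∀ v : V, (G.induce ({v}ᶜ : Set V)).Connected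

def KConnected {V : Type*} (G : SimpleGraph V) (k : ℕ) : Prop :=
  k < Nat.card V ∧ ∀ S : Set V, S.ncard < k → (G.induce (Sᶜ : Set V)).Connected

def HFree {W V : Type*} (H : SimpleGraph W) (G : SimpleGraph V) : Prop :=
  ¬ Nonempty (H ↪g G)

def IsCompleteMultipartite {V : Type*} (G : SimpleGraph V) : Prop :=
  ∃ s : Setoid V, ∀ a b : V, G.Adj a b ↔ ¬ s.r a b

/-- `W = K₁ + 3K₂`: vertex 0 joined to three disjoint edges 12, 34, 56. -/
def Wgraph : SimpleGraph (Fin 7) :=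
  SimpleGraph.fromRel (fun a b =>
    a = 0 ∨ (a = 1 ∧ b = 2) ∨ (a = 3 ∧ b = 4) ∨ (a = 5 ∧ b = 6))

/-- `Z₁`, the paw: triangle 012 plus pendant edge 23. -/
def pawGraph : SimpleGraph (Fin 4) :=
  SimpleGraph.fromRel (fun a b =>
    (a = 0 ∧ b = 1) ∨ (a = 1 ∧ b = 2) ∨ (a = 0 ∧ b = 2) ∨ (a = 2 ∧ b = 3))

/-- The claw `K₁,₃`. -/
def clawGraph : SimpleGraph (Fin 4) :=
  SimpleGraph.fromRel (fun a _ => a = 0)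

/-- `K₄` minus the edge 23. -/
def K4minusGraph : SimpleGraph (Fin 4) :=
  SimpleGraph.fromRel (fun a b => ¬((a = 2 ∧ b = 3) ∨ (a = 3 ∧ b = 2)))

/-- `K₁,₃**`: spider with legs of lengths 2, 2, 1 (center 0, legs 0-1-2, 0-3-4, 0-5). -/
def spider221 : SimpleGraph (Fin 6) :=
  SimpleGraph.fromRel (fun a b =>
    (a = 0 ∧ b = 1) ∨ (a = 1 ∧ b = 2) ∨ (a = 0 ∧ b = 3) ∨ (a = 3 ∧ b = 4) ∨ (a = 0 ∧ b = 5))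

/-- The theta graph `A_s`: two vertices joined by three internally disjoint paths,
each with `s` internal vertices. -/
def thetaGraph (s : ℕ) : SimpleGraph (Fin 2 ⊕ Fin 3 × Fin s) :=
  SimpleGraph.fromRel (fun a b =>
    (∃ (j : Fin 3) (k : Fin s), a = Sum.inl 0 ∧ b = Sum.inr (j, k) ∧ (k : ℕ) = 0) ∨
    (∃ (j : Fin 3) (k : Fin s), a = Sum.inl 1 ∧ b = Sum.inr (j, k) ∧ (k : ℕ) = s - 1) ∨
    (∃ (j : Fin 3) (k l : Fin s), a = Sum.inr (j, k) ∧ b = Sum.inr (j, l) ∧ (l : ℕ) = (k : ℕ) + 1))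

/-- `A′_s = 2K₁ + sK₂`. -/
def APrime (s : ℕ) : SimpleGraph (Fin 2 ⊕ Fin s × Fin 2) :=
  SimpleGraph.fromRel (fun a b =>
    (∃ (i : Fin 2) (x : Fin s × Fin 2), a = Sum.inl i ∧ b = Sum.inr x) ∨
    (∃ j : Fin s, a = Sum.inr (j, 0) ∧ b = Sum.inr (j, 1)))

/-- `A″_s = K₂ + (2K₂ ∪ K_s)`. -/
def ADoublePrime (s : ℕ) : SimpleGraph (Fin 2 ⊕ (Fin 2 × Fin 2 ⊕ Fin s)) :=
  SimpleGraph.fromRel (fun a b =>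
    (∃ i : Fin 2, a = Sum.inl i) ∨
    (∃ j : Fin 2, a = Sum.inr (Sum.inl (j, 0)) ∧ b = Sum.inr (Sum.inl (j, 1))) ∨
    (∃ p q : Fin s, a = Sum.inr (Sum.inr p) ∧ b = Sum.inr (Sum.inr q)))

/-- `A_s⁽¹⁾`: two disjoint triangles joined by three vertex-disjoint paths with `s`
internal vertices each. -/
def AOne (s : ℕ) : SimpleGraph (Fin 2 × Fin 3 ⊕ Fin 3 × Fin s) :=
  SimpleGraph.fromRel (fun a b =>
    (∃ (t : Fin 2) (i j : Fin 3), a = Sum.inl (t, i) ∧ b = Sum.inl (t, j)) ∨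
    (∃ (j : Fin 3) (k : Fin s), a = Sum.inl (0, j) ∧ b = Sum.inr (j, k) ∧ (k : ℕ) = 0) ∨
    (∃ (j : Fin 3) (k : Fin s), a = Sum.inl (1, j) ∧ b = Sum.inr (j, k) ∧ (k : ℕ) = s - 1) ∨
    (∃ (j : Fin 3) (k l : Fin s), a = Sum.inr (j, k) ∧ b = Sum.inr (j, l) ∧ (l : ℕ) = (k : ℕ) + 1))

/-- `A_s⁽⁵⁾`: vertices `x₁, x₂` and `y_{i,j}`; edges `x₁x₂`, `y_{1,j}y_{2,j}`, `x_i y_{i,j}`. -/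
def AFive (s : ℕ) : SimpleGraph (Fin 2 ⊕ Fin 2 × Fin s) :=
  SimpleGraph.fromRel (fun a b =>
    (a = Sum.inl 0 ∧ b = Sum.inl 1) ∨
    (∃ j : Fin s, a = Sum.inr (0, j) ∧ b = Sum.inr (1, j)) ∨
    (∃ (i : Fin 2) (j : Fin s), a = Sum.inl i ∧ b = Sum.inr (i, j)))

lemma exists_inj_into {V : Type*} [Fintype V] (s : Set V) (k : ℕ) (hk : k ≤ s.ncard) :
    ∃ g : Fin k → V, Function.Injective g ∧ ∀ i, g i ∈ s := by
  classical
  have h : k ≤ s.toFinset.card := by rwa [Set.ncard_eq_toFinset_card'] at hk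
  obtain ⟨t, hts, htc⟩ := Finset.exists_subset_card_eq h
  let e := (Finset.equivFinOfCardEq htc).symm
  refine ⟨fun i => (e i : V), ?_, fun i => ?_⟩
  · intro x y hxy
    have : (e x) = (e y) := Subtype.ext hxy
    exact e.injective this
  · exact Set.mem_toFinset.mp (hts (e i).2)

lemma long_cycle {V : Type*} [Fintype V] (G : SimpleGraph V)
    (A B : Set V) (hdisj : Disjoint A B)
    (hjoin : ∀ a ∈ A, ∀ b ∈ B, G.Adj a b)
    (k : ℕ) (hk2 : 2 ≤ k) (hkB : k ≤ B.ncard) (hkA : k ≤ A.ncard) :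
    ∃ g : ZMod (2 * k) → V, IsCycleEmb G (2 * k) g := by
  classical
  obtain ⟨bb, hbbinj, hbbB⟩ := exists_inj_into B k hkB
  obtain ⟨aa, haainj, haaA⟩ := exists_inj_into A k hkA
  haveI : NeZero (2 * k) := ⟨by omega⟩
  haveI : Fact (1 < 2 * k) := ⟨by omega⟩
  have hk0 : 0 < k := by omega
  set bb' : ℕ → V := fun m => bb ⟨m % k, Nat.mod_lt _ hk0⟩ with hbb'
  set aa' : ℕ → V := fun m => aa ⟨m % k, Nat.mod_lt _ hk0⟩ with haa'
  have hbb'B : ∀ m, bb' m ∈ B := fun m => hbbB _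
  have haa'A : ∀ m, aa' m ∈ A := fun m => haaA _
  have hbb'inj : ∀ m m', m < k → m' < k → bb' m = bb' m' → m = m' := by
    intro m m' hm hm' h
    have := congrArg Fin.val (hbbinj h)
    simpa [Nat.mod_eq_of_lt hm, Nat.mod_eq_of_lt hm'] using this
  have haa'inj : ∀ m m', m < k → m' < k → aa' m = aa' m' → m = m' := by
    intro m m' hm hm' h
    have := congrArg Fin.val (haainj h)
    simpa [Nat.mod_eq_of_lt hm, Nat.mod_eq_of_lt hm'] using this
  refine ⟨fun j => if j.val % 2 = 0 then bb' (j.val / 2) else aa' (j.val / 2),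
    by omega, ?_, ?_⟩
  · intro x y hxy
    have hx := ZMod.val_lt x
    have hy := ZMod.val_lt y
    apply ZMod.val_injective
    by_cases hpx : x.val % 2 = 0 <;> by_cases hpy : y.val % 2 = 0 <;>
        simp only [hpx, hpy, if_true, if_false, reduceIte] at hxy
    · have := hbb'inj _ _ (by omega) (by omega) hxy; omega
    · exact absurd (hxy ▸ hbb'B (x.val / 2))
        (fun h => Set.disjoint_left.mp hdisj (haa'A _) h)
    · exact absurd (hxy ▸ haa'A (x.val / 2))
        (fun h => Set.disjoint_left.mp hdisj h (hbb'B _))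
    · have := haa'inj _ _ (by omega) (by omega) hxy; omega
  · intro j
    have hj := ZMod.val_lt j
    have hval : (j + 1).val = (j.val + 1) % (2 * k) := by
      rw [ZMod.val_add, ZMod.val_one]
    by_cases hpj : j.val % 2 = 0
    · have h1 : j.val + 1 < 2 * k := by omega
      have hv1 : (j + 1).val = j.val + 1 := by rw [hval, Nat.mod_eq_of_lt h1]
      have hp1 : ¬ (j + 1).val % 2 = 0 := by omega
      simp only [hpj, hp1, if_true, reduceIte]
      exact (hjoin _ (haa'A _) _ (hbb'B _)).symm
    · by_cases h1 : j.val + 1 < 2 * k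
      · have hv1 : (j + 1).val = j.val + 1 := by rw [hval, Nat.mod_eq_of_lt h1]
        have hp1 : (j + 1).val % 2 = 0 := by omega
        simp only [hpj, hp1, if_false, reduceIte]
        exact hjoin _ (haa'A _) _ (hbb'B _)
      · have hv1 : (j + 1).val = 0 := by
          rw [hval]
          have : j.val + 1 = 2 * k := by omega
          rw [this, Nat.mod_self]
        have hp1 : (j + 1).val % 2 = 0 := by omega
        simp only [hpj, hp1, if_false, reduceIte]
        exact hjoin _ (haa'A _) _ (hbb'B _)

lemma insert_vertex {V : Type*} (G : SimpleGraph V) (n : ℕ) (f : ZMod n → V)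
    (hc : IsCycleEmb G n f) (b : V) (hbf : b ∉ Set.range f) (i : ZMod n)
    (h1 : G.Adj (f i) b) (h2 : G.Adj b (f (i + 1))) :
    ∃ g : ZMod (n + 1) → V, IsCycleEmb G (n + 1) g := by
  classical
  obtain ⟨hn3, hfinj, hfadj⟩ := hc
  haveI : NeZero n := ⟨by omega⟩
  haveI : Fact (1 < n + 1) := ⟨by omega⟩
  refine ⟨fun j => if j.val < n then f ((j.val : ZMod n) + i + 1) else b, by omega, ?_, ?_⟩
  · intro x y hxy
    have hx := ZMod.val_lt x
    have hy := ZMod.val_lt y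
    apply ZMod.val_injective
    by_cases hpx : x.val < n <;> by_cases hpy : y.val < n <;>
        simp only [hpx, hpy, if_true, if_false, reduceIte] at hxy
    · have := hfinj hxy
      have h3 : (x.val : ZMod n) = (y.val : ZMod n) := by
        have := add_right_cancel this
        exact add_right_cancel this
      have := congrArg ZMod.val h3
      rwa [ZMod.val_cast_of_lt hpx, ZMod.val_cast_of_lt hpy] at this
    · exact absurd ⟨_, hxy⟩ hbf
    · exact absurd ⟨_, hxy.symm⟩ hbf
    · omega
  · intro j
    have hj := ZMod.val_lt j
    have hval : (j + 1).val = (j.val + 1) % (n + 1) := by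
      rw [ZMod.val_add, ZMod.val_one]
    by_cases hc1 : j.val + 1 < n
    · have hv1 : (j + 1).val = j.val + 1 := by rw [hval, Nat.mod_eq_of_lt (by omega)]
      have hjlt : j.val < n := by omega
      simp only [hv1, hjlt, hc1, if_true, reduceIte]
      have hcast : (((j.val + 1 : ℕ)) : ZMod n) + i + 1 = ((j.val : ZMod n) + i + 1) + 1 := by
        push_cast; ring
      rw [hcast]
      exact hfadj _
    · by_cases hc2 : j.val < n
      · -- j.val = n - 1
        have hjv : j.val = n - 1 := by omega
        have hv1 : (j + 1).val = n := by
          rw [hval]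
          have : j.val + 1 = n := by omega
          rw [this, Nat.mod_eq_of_lt (by omega)]
        have hnn : ¬ (j + 1).val < n := by omega
        simp only [hc2, hnn, if_true, if_false, reduceIte]
        have hcast : ((j.val : ℕ) : ZMod n) + i + 1 = i := by
          have hz : ((j.val : ℕ) : ZMod n) + 1 = 0 := by
            have h4 : ((j.val + 1 : ℕ) : ZMod n) = 0 := by
              rw [hjv, show n - 1 + 1 = n from by omega, ZMod.natCast_self]
            exact_mod_cast h4
          rw [add_right_comm, hz, zero_add]
        rw [hcast]
        exact h1
      · -- j.val = n
        have hjv : j.val = n := by omega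
        have hv1 : (j + 1).val = 0 := by
          rw [hval, hjv, Nat.mod_self]
        have h0 : (j + 1).val < n := by omega
        simp only [if_neg hc2, if_pos h0]
        have : (((j + 1).val : ℕ) : ZMod n) + i + 1 = i + 1 := by
          rw [hv1]; push_cast; ring
        rw [this]
        exact h2

/-- In a 2-connected `{P₄, W}`-free graph with `|V(G)| ≥ 4` and a complete-join
partition `{A, B}` with `|A| ≥ |B| ≥ 2`, every longest cycle contains all of `B`. -/
theorem stmt14 {V : Type*} [Fintype V] (G : SimpleGraph V)
    (h2 : TwoConnected G) (hP4 : HFree (SimpleGraph.pathGraph 4) G) (hW : HFree Wgraph G)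
    (hcard : 4 ≤ Fintype.card V)
    (A B : Set V) (hpart : A ∪ B = Set.univ) (hdisj : Disjoint A B)
    (hBA : B.ncard ≤ A.ncard) (hB2 : 2 ≤ B.ncard)
    (hjoin : ∀ a ∈ A, ∀ b ∈ B, G.Adj a b)
    (n : ℕ) (f : ZMod n → V) (hC : IsLongestCycle G n f) :
    B ⊆ Set.range f := by
    classical
  intro b hb
  by_contra hbf
  obtain ⟨⟨hn3, hfinj, hfadj⟩, hmax⟩ := hC
  haveI : NeZero n := ⟨by omega⟩
  obtain ⟨g2, hg2⟩ := long_cycle G A B hdisj hjoin B.ncard hB2 le_rfl hBA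
  have hn2B : 2 * B.ncard ≤ n := hmax _ _ hg2
  have hnoAA : ∀ i : ZMod n, ¬ (f i ∈ A ∧ f (i + 1) ∈ A) := by
    rintro i ⟨ha1, ha2⟩
    have hb1 : G.Adj (f i) b := hjoin _ ha1 b hb
    have hb2 : G.Adj b (f (i + 1)) := (hjoin _ ha2 b hb).symm
    obtain ⟨g, hg⟩ := insert_vertex G n f ⟨hn3, hfinj, hfadj⟩ b hbf i hb1 hb2
    have := hmax _ _ hg
    omega
  set s : Finset (ZMod n) := Finset.univ.filter (fun i => f i ∈ A) with hs
  have hmem : ∀ i ∈ s, i + 1 ∈ sᶜ := by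
    intro i hi
    simp only [hs, Finset.mem_compl, Finset.mem_filter, Finset.mem_univ, true_and] at hi ⊢
    exact fun h => hnoAA i ⟨hi, h⟩
  have hsle : s.card ≤ sᶜ.card :=
    Finset.card_le_card_of_injOn (· + 1) hmem (fun a _ c _ h => by simpa using h)
  have htot : s.card + sᶜ.card = n := by
    rw [Finset.card_add_card_compl, ZMod.card]
  have himg : (sᶜ.image f).card = sᶜ.card := Finset.card_image_of_injective _ hfinj
  have hsub : sᶜ.image f ⊆ B.toFinset.erase b := by
    intro v hv
    obtain ⟨i, hi, rfl⟩ := Finset.mem_image.mp hv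
    simp only [hs, Finset.mem_compl, Finset.mem_filter, Finset.mem_univ, true_and] at hi
    have hvB : f i ∈ B := by
      have h5 : f i ∈ A ∪ B := by rw [hpart]; trivial
      exact h5.resolve_left hi
    exact Finset.mem_erase.mpr ⟨fun h => hbf ⟨i, h⟩, Set.mem_toFinset.mpr hvB⟩
  have hcard2 := Finset.card_le_card hsub
  have herase : (B.toFinset.erase b).card = B.ncard - 1 := by
    rw [Finset.card_erase_of_mem (Set.mem_toFinset.mpr hb), ← Set.ncard_eq_toFinset_card']
  omega
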